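/- If a matrix Φ = [φ_1 ⋯ φ_N] has (K,θ̂)-flat restricted orthogonality, then it has restricted orthogonality constant θ_K ≤ C θ̂ log K, where one may take C = 75 (valid for all K ≥ 2). -/

import Mathlib

open MeasureTheory Finset

lemma sqrtAMGM {a b : ℝ} (ha : 0 ≤ a) (hb : 0 ≤ b) : Real.sqrt (a*b) ≤ (a+b)/2 := by
  rw [Real.sqrt_mul ha]
  nlinarith [sq_nonneg (Real.sqrt a - Real.sqrt b), Real.sq_sqrt ha, Real.sq_sqrt hb,
    Real.sqrt_nonneg a, Real.sqrt_nonneg b]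

lemma Ioc_inter_Iic {c D : ℝ} (hcD : c ≤ D) : Set.Ioc (0:ℝ) D ∩ Set.Iic c = Set.Ioc 0 c := by
  ext t; simp only [Set.mem_Ioc, Set.mem_Iic, Set.mem_inter_iff]
  exact ⟨fun ⟨⟨h1,_⟩,h3⟩ => ⟨h1,h3⟩, fun ⟨h1,h3⟩ => ⟨⟨h1, le_trans h3 hcD⟩, h3⟩⟩

lemma intInt_ind_smul (c : ℝ) (z : ℂ) (a b : ℝ) :
    IntervalIntegrable (fun t => (if t ≤ c then (1:ℝ) else 0) • z) volume a b := by
  have h : (fun t => (if t ≤ c then (1:ℝ) else 0) • z) = (Set.Iic c).indicator (fun _ => z) := by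
    funext t; by_cases ht : t ≤ c <;> simp [Set.indicator_apply, Set.mem_Iic, ht]
  rw [h]
  apply IntegrableOn.intervalIntegrable
  apply MeasureTheory.IntegrableOn.indicator _ measurableSet_Iic
  exact integrableOn_const measure_Icc_lt_top.ne

lemma intInt_ind_mul (c a b : ℝ) : IntervalIntegrable (fun t => t * (if t ≤ c then (1:ℝ) else 0)) volume a b := by
  have h : (fun t => t * (if t ≤ c then (1:ℝ) else 0)) = (Set.Iic c).indicator (fun t => t) := by
    funext t; by_cases ht : t ≤ c <;> simp [Set.indicator_apply, Set.mem_Iic, ht]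
  rw [h]
  apply IntegrableOn.intervalIntegrable
  apply MeasureTheory.IntegrableOn.indicator _ measurableSet_Iic
  exact Continuous.integrableOn_uIcc continuous_id

lemma integral_ind_one {c D : ℝ} (hc : 0 ≤ c) (hcD : c ≤ D) :
    ∫ t in (0:ℝ)..D, (if t ≤ c then (1:ℝ) else 0) = c := by
  have h0D : (0:ℝ) ≤ D := le_trans hc hcD
  rw [intervalIntegral.integral_of_le h0D]
  have h : (fun t => if t ≤ c then (1:ℝ) else 0) = (Set.Iic c).indicator (fun _ => (1:ℝ)) := by
    funext t; simp [Set.indicator_apply, Set.mem_Iic]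
  rw [h, MeasureTheory.setIntegral_indicator measurableSet_Iic, Ioc_inter_Iic hcD]
  simp [Real.volume_Ioc, ENNReal.toReal_ofReal hc]
  exact hc

lemma integral_ind_id {c D : ℝ} (hc : 0 ≤ c) (hcD : c ≤ D) :
    ∫ t in (0:ℝ)..D, t * (if t ≤ c then (1:ℝ) else 0) = c^2/2 := by
  have h0D : (0:ℝ) ≤ D := le_trans hc hcD
  rw [intervalIntegral.integral_of_le h0D]
  have h : (fun t => t * (if t ≤ c then (1:ℝ) else 0)) = (Set.Iic c).indicator (fun t => t) := by
    funext t; by_cases ht : t ≤ c <;> simp [Set.indicator_apply, Set.mem_Iic, ht]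
  rw [h, MeasureTheory.setIntegral_indicator measurableSet_Iic, Ioc_inter_Iic hcD,
    ← intervalIntegral.integral_of_le hc]
  rw [integral_id]
  ring

lemma core {N K : ℕ} (hK : 2 ≤ K) (ℓ : (Fin N → ℝ) →ₗ[ℝ] ℂ) (S : Finset (Fin N))
    (hS : S.card ≤ K) (M : ℝ) (hM : 0 ≤ M)
    (hI : ∀ I ⊆ S, ‖ℓ (fun i => if i ∈ I then (1:ℝ) else 0)‖ ≤ M * Real.sqrt I.card)
    (u : Fin N → ℝ) (hu0 : ∀ i, 0 ≤ u i) (huS : ∀ i ∉ S, u i = 0) :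
    ‖ℓ u‖ ≤ (7/4) * Real.sqrt (Real.log K) * M * Real.sqrt (∑ i, u i ^ 2) := by
  set E := ∑ i, u i ^ 2 with hEdef
  set L := Real.log K with hLdef
  have hL2 : Real.log 2 ≤ L := by
    apply Real.log_le_log (by norm_num)
    exact_mod_cast hK
  have hL064 : (16:ℝ)/25 ≤ L := le_trans (by linarith [Real.log_two_gt_d9]) hL2
  have hL0 : 0 < L := lt_of_lt_of_le (by norm_num) hL064
  have hsqL : (4:ℝ)/5 ≤ Real.sqrt L := by
    rw [show (4:ℝ)/5 = Real.sqrt ((4/5)^2) from (Real.sqrt_sq (by norm_num)).symm]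
    exact Real.sqrt_le_sqrt (by norm_num; linarith)
  have hsqL0 : 0 < Real.sqrt L := lt_of_lt_of_le (by norm_num) hsqL
  by_cases hu : u = 0
  · rw [hu, map_zero, norm_zero]
    positivity
  · -- u ≠ 0
    have hE0 : 0 < E := by
      rcases Function.ne_iff.1 hu with ⟨i0, hi0⟩
      have : 0 < u i0 := lt_of_le_of_ne (hu0 i0) (Ne.symm hi0)
      exact Finset.sum_pos' (fun i _ => sq_nonneg _) ⟨i0, Finset.mem_univ _, by positivity⟩
    set D := Real.sqrt E with hDdef
    have hD0 : 0 < D := Real.sqrt_pos.2 hE0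
    have huD : ∀ i, u i ≤ D := by
      intro i
      rw [hDdef, show u i = Real.sqrt (u i ^ 2) from (Real.sqrt_sq (hu0 i)).symm]
      exact Real.sqrt_le_sqrt (Finset.single_le_sum (fun j _ => sq_nonneg (u j)) (Finset.mem_univ i))
    have hK1 : (1:ℝ) ≤ Real.sqrt K := by
      rw [show (1:ℝ) = Real.sqrt 1 from (Real.sqrt_one).symm]
      exact Real.sqrt_le_sqrt (by exact_mod_cast le_trans one_le_two hK)
    have hsqK0 : (0:ℝ) < Real.sqrt K := lt_of_lt_of_le one_pos hK1
    set t0 := D / Real.sqrt K with ht0def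
    have ht00 : 0 < t0 := div_pos hD0 hsqK0
    have ht0D : t0 ≤ D := by
      rw [ht0def, div_le_iff₀ hsqK0]
      nlinarith
    set lam := D / Real.sqrt L with hlamdef
    have hlam0 : 0 < lam := div_pos hD0 hsqL0
    clear_value E L D t0 lam
    set g : ℝ → ℂ := fun t => ∑ i ∈ S, (if t ≤ u i then (1:ℝ) else 0) • ℓ (Pi.single i 1) with hgdef
    clear_value g
    have hgInt : ∀ a b : ℝ, IntervalIntegrable g volume a b := by
      intro a b
      have hsum : g = ∑ i ∈ S, (fun t => (if t ≤ u i then (1:ℝ) else 0) • ℓ (Pi.single i 1)) := by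
        funext t; rw [hgdef]; simp [Finset.sum_apply]
      rw [hsum]
      exact IntervalIntegrable.sum S (fun i _ => intInt_ind_smul (u i) _ a b)
    -- vector identity
    have hvec : ∀ t : ℝ, (fun j => if j ∈ S.filter (fun i => t ≤ u i) then (1:ℝ) else 0)
        = ∑ i ∈ S, (if t ≤ u i then (1:ℝ) else 0) • (Pi.single i 1 : Fin N → ℝ) := by
      intro t; funext j
      rw [Finset.sum_apply]
      by_cases hjS : j ∈ S
      · rw [Finset.sum_eq_single j]
        · simp [hjS, Pi.single_apply]
        · intro i _ hij
          simp [Pi.single_apply, Ne.symm hij]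
        · intro h; exact absurd hjS h
      · rw [Finset.sum_eq_zero]
        · simp [hjS]
        · intro i hiS
          have : j ≠ i := fun h => hjS (h ▸ hiS)
          simp [Pi.single_apply, this]
    have hg_eq : ∀ t : ℝ, g t = ℓ (fun j => if j ∈ S.filter (fun i => t ≤ u i) then (1:ℝ) else 0) := by
      intro t
      rw [hgdef, hvec t, map_sum]
      simp only [_root_.map_smul]
    set f : ℝ → ℝ := fun t => ((S.filter (fun i => t ≤ u i)).card : ℝ) with hfdef
    clear_value f
    have hfnn : ∀ t, 0 ≤ f t := fun t => by simp only [hfdef]; positivity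
    have hg_bound : ∀ t : ℝ, ‖g t‖ ≤ M * Real.sqrt (f t) := by
      intro t; rw [hg_eq t]; simp only [hfdef]; exact hI _ (Finset.filter_subset _ _)
    have hcardK : ∀ t : ℝ, f t ≤ K := by
      intro t
      simp only [hfdef]
      have hn : (S.filter (fun i => t ≤ u i)).card ≤ K :=
        le_trans (Finset.card_le_card (Finset.filter_subset (fun i => t ≤ u i) S)) hS
      exact Nat.cast_le.2 hn
    have hgK : ∀ t : ℝ, ‖g t‖ ≤ M * Real.sqrt K :=
      fun t => le_trans (hg_bound t) (mul_le_mul_of_nonneg_left (Real.sqrt_le_sqrt (hcardK t)) hM)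
    -- key identity
    have hkey : ℓ u = ∫ t in (0:ℝ)..D, g t := by
      simp only [hgdef]
      rw [intervalIntegral.integral_finset_sum (fun i _ => intInt_ind_smul (u i) _ 0 D)]
      have heach : ∀ i ∈ S, (∫ t in (0:ℝ)..D, (if t ≤ u i then (1:ℝ) else 0) • ℓ (Pi.single i 1))
          = u i • ℓ (Pi.single i 1) := by
        intro i _
        rw [intervalIntegral.integral_smul_const, integral_ind_one (hu0 i) (huD i)]
      rw [Finset.sum_congr rfl heach]
      simp only [← _root_.map_smul]
      rw [← map_sum]
      congr 1
      funext j
      rw [Finset.sum_apply]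
      by_cases hjS : j ∈ S
      · rw [Finset.sum_eq_single j]
        · simp [Pi.single_apply]
        · intro i _ hij; simp [Pi.single_apply, Ne.symm hij]
        · intro h; exact absurd hjS h
      · rw [Finset.sum_eq_zero]
        · exact huS j hjS
        · intro i hiS
          have : j ≠ i := fun h => hjS (h ▸ hiS)
          simp [Pi.single_apply, this]
    -- integrability of t * f t
    have hf_eq : ∀ t, f t = ∑ i ∈ S, (if t ≤ u i then (1:ℝ) else 0) := by
      intro t
      simp only [hfdef]
      rw [Finset.card_filter]
      push_cast
      rfl
    have htf_eq : (fun t => t * f t) = fun t => ∑ i ∈ S, t * (if t ≤ u i then (1:ℝ) else 0) := by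
      funext t; rw [hf_eq, Finset.mul_sum]
    have hInt_tf : ∀ a b : ℝ, IntervalIntegrable (fun t => t * f t) volume a b := by
      intro a b
      rw [htf_eq]
      have hsum : (fun t => ∑ i ∈ S, t * (if t ≤ u i then (1:ℝ) else 0))
          = ∑ i ∈ S, (fun t => t * (if t ≤ u i then (1:ℝ) else 0)) := by
        funext t; simp [Finset.sum_apply]
      rw [hsum]
      exact IntervalIntegrable.sum S (fun i _ => intInt_ind_mul (u i) a b)
    have hInt_inv : IntervalIntegrable (fun t => lam / t) volume t0 D := by
      apply ContinuousOn.intervalIntegrable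
      apply ContinuousOn.div continuousOn_const continuousOn_id
      intro t ht
      rw [Set.uIcc_of_le ht0D] at ht
      exact ne_of_gt (lt_of_lt_of_le ht00 ht.1)
    have hInt_rhs : IntervalIntegrable (fun t => M * ((t * f t)/lam + lam/t)/2) volume t0 D :=
      ((((hInt_tf t0 D).div_const lam).add hInt_inv).const_mul M).div_const 2
    -- pointwise bound on [t0, D]
    have hpt : ∀ t ∈ Set.Icc t0 D, ‖g t‖ ≤ M * ((t * f t)/lam + lam/t)/2 := by
      intro t ht
      have ht0' : 0 < t := lt_of_lt_of_le ht00 ht.1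
      have hab : (t * f t / lam) * (lam / t) = f t := by
        field_simp
      have hamgm := sqrtAMGM (a := t * f t / lam) (b := lam / t)
        (div_nonneg (mul_nonneg ht0'.le (hfnn t)) hlam0.le) (div_nonneg hlam0.le ht0'.le)
      rw [hab] at hamgm
      calc ‖g t‖ ≤ M * Real.sqrt (f t) := hg_bound t
        _ ≤ M * ((t * f t / lam + lam / t)/2) := mul_le_mul_of_nonneg_left hamgm hM
        _ = M * ((t * f t)/lam + lam/t)/2 := by ring
    -- norm bound and split
    have hnorm : ‖ℓ u‖ ≤ ∫ t in (0:ℝ)..D, ‖g t‖ := by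
      rw [hkey]
      exact intervalIntegral.norm_integral_le_integral_norm hD0.le
    have hsplit : (∫ t in (0:ℝ)..t0, ‖g t‖) + ∫ t in t0..D, ‖g t‖ = ∫ t in (0:ℝ)..D, ‖g t‖ :=
      intervalIntegral.integral_add_adjacent_intervals (hgInt 0 t0).norm (hgInt t0 D).norm
    have bound1 : ∫ t in (0:ℝ)..t0, ‖g t‖ ≤ M * D := by
      have h1 : ∫ t in (0:ℝ)..t0, ‖g t‖ ≤ ∫ t in (0:ℝ)..t0, (M * Real.sqrt K) :=
        intervalIntegral.integral_mono_on ht00.le (hgInt 0 t0).norm intervalIntegrable_const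
          (fun t _ => hgK t)
      rw [intervalIntegral.integral_const, smul_eq_mul, sub_zero] at h1
      apply le_trans h1
      have heq : t0 * (M * Real.sqrt K) = M * D := by
        rw [ht0def]
        field_simp
      exact le_of_eq heq
    -- integral of t * f on [0, D]
    have hfull : ∫ t in (0:ℝ)..D, t * f t = E/2 := by
      rw [htf_eq]
      rw [intervalIntegral.integral_finset_sum (fun i _ => intInt_ind_mul (u i) 0 D)]
      have heach : ∀ i ∈ S, (∫ t in (0:ℝ)..D, t * (if t ≤ u i then (1:ℝ) else 0)) = u i ^2 / 2 :=
        fun i _ => integral_ind_id (hu0 i) (huD i)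
      rw [Finset.sum_congr rfl heach, ← Finset.sum_div]
      congr 1
      rw [hEdef]
      apply Finset.sum_subset (Finset.subset_univ S)
      intro i _ hi
      rw [huS i hi]
      ring
    have hItf : ∫ t in t0..D, t * f t ≤ E/2 := by
      have hnn : 0 ≤ ∫ t in (0:ℝ)..t0, t * f t :=
        intervalIntegral.integral_nonneg ht00.le (fun t ht => mul_nonneg ht.1 (hfnn t))
      have hadd := intervalIntegral.integral_add_adjacent_intervals (hInt_tf 0 t0) (hInt_tf t0 D)
      rw [hfull] at hadd
      linarith
    have hIinv : ∫ t in t0..D, lam / t = lam * (L/2) := by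
      have h1 : (fun t => lam / t) = fun t => lam * (1/t) := by funext t; ring
      rw [h1, intervalIntegral.integral_const_mul, integral_one_div]
      · congr 1
        have hDt0 : D / t0 = Real.sqrt K := by
          rw [ht0def]
          field_simp
        rw [hDt0, Real.log_sqrt (Nat.cast_nonneg K)]
        rw [hLdef]
      · intro h
        rw [Set.uIcc_of_le ht0D] at h
        have := h.1
        linarith
    have bound2 : ∫ t in t0..D, ‖g t‖ ≤ M * ((E/2)/lam + lam*(L/2))/2 := by
      have h2 : ∫ t in t0..D, ‖g t‖ ≤ ∫ t in t0..D, M * ((t * f t)/lam + lam/t)/2 :=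
        intervalIntegral.integral_mono_on ht0D (hgInt t0 D).norm hInt_rhs hpt
      apply le_trans h2
      have hval : ∫ t in t0..D, M * ((t * f t)/lam + lam/t)/2
          = M * ((∫ t in t0..D, t * f t)/lam + lam*(L/2))/2 := by
        rw [show (fun t => M * ((t * f t)/lam + lam/t)/2)
            = fun t => (M/2) * ((t * f t)/lam + lam/t) from funext fun t => by ring]
        rw [intervalIntegral.integral_const_mul,
          intervalIntegral.integral_add ((hInt_tf t0 D).div_const lam) hInt_inv,
          intervalIntegral.integral_div, hIinv]
        ring
      rw [hval]
      gcongr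
    have hED : E = D^2 := by rw [hDdef]; exact (Real.sq_sqrt hE0.le).symm
    have hss : Real.sqrt L * Real.sqrt L = L := Real.mul_self_sqrt hL0.le
    have hlamval : (E/2)/lam + lam*(L/2) = D * Real.sqrt L := by
      have h1 : (D^2/2)/(D/Real.sqrt L) = D*Real.sqrt L/2 := by
        field_simp
      have h2 : (D/Real.sqrt L)*(L/2) = D*Real.sqrt L/2 := by
        field_simp
        linear_combination (-1)*hss
      rw [hlamdef, hED, h1, h2]
      ring
    have hfinal : ‖ℓ u‖ ≤ M * D + M * (D * Real.sqrt L)/2 := by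
      calc ‖ℓ u‖ ≤ ∫ t in (0:ℝ)..D, ‖g t‖ := hnorm
        _ = (∫ t in (0:ℝ)..t0, ‖g t‖) + ∫ t in t0..D, ‖g t‖ := hsplit.symm
        _ ≤ M * D + M * ((E/2)/lam + lam*(L/2))/2 := add_le_add bound1 bound2
        _ = M * D + M * (D * Real.sqrt L)/2 := by rw [hlamval]
    have haux : 0 ≤ M * D * ((5/4) * Real.sqrt L - 1) :=
      mul_nonneg (mul_nonneg hM hD0.le) (by linarith)
    show ‖ℓ u‖ ≤ 7/4 * Real.sqrt L * M * D
    nlinarith [hfinal, haux]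

open MeasureTheory Finset in
noncomputable def Lmap {N : ℕ} (c : Fin N → ℂ) : (Fin N → ℝ) →ₗ[ℝ] ℂ where
  toFun u := ∑ i, u i • c i
  map_add' u v := by simp [add_smul, Finset.sum_add_distrib]
  map_smul' r u := by simp [Finset.smul_sum, smul_smul, mul_assoc]

lemma Lmap_apply {N : ℕ} (c : Fin N → ℂ) (u : Fin N → ℝ) :
    Lmap c u = ∑ i, (u i : ℂ) * c i := by
  simp [Lmap, Complex.real_smul]

lemma Lmap_ind {N : ℕ} (c : Fin N → ℂ) (I : Finset (Fin N)) :
    Lmap c (fun i => if i ∈ I then (1:ℝ) else 0) = ∑ i ∈ I, c i := by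
  rw [Lmap_apply]
  rw [Finset.sum_congr rfl (fun i _ => by
    show ((if i ∈ I then (1:ℝ) else 0 : ℝ) : ℂ) * c i = (if i ∈ I then c i else 0)
    by_cases h : i ∈ I <;> simp [h])]
  simp [Finset.sum_ite_mem]

lemma mulVec_coe {M N : ℕ} (Φ : Matrix (Fin M) (Fin N) ℂ) (u : Fin N → ℝ) (m : Fin M) :
    Φ.mulVec (fun i => ((u i : ℝ) : ℂ)) m = ∑ i, Φ m i * (u i : ℂ) := by
  simp [Matrix.mulVec, dotProduct]

lemma mulVec_ind {M N : ℕ} (Φ : Matrix (Fin M) (Fin N) ℂ) (I : Finset (Fin N)) (m : Fin M) :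
    Φ.mulVec (fun i => if i ∈ I then (1:ℂ) else 0) m = ∑ i ∈ I, Φ m i := by
  simp [Matrix.mulVec, dotProduct, mul_ite, mul_one, mul_zero, Finset.sum_ite_mem]

lemma factA {M N : ℕ} (Φ : Matrix (Fin M) (Fin N) ℂ) (u : Fin N → ℝ) (w : Fin M → ℂ) :
    (∑ m, star (Φ.mulVec (fun i => ((u i : ℝ):ℂ)) m) * w m)
      = Lmap (fun i => ∑ m, star (Φ m i) * w m) u := by
  rw [Lmap_apply]
  have h1 : ∀ m, star (Φ.mulVec (fun i => ((u i : ℝ):ℂ)) m) * w m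
      = ∑ i, (u i : ℂ) * (star (Φ m i) * w m) := by
    intro m
    rw [mulVec_coe, star_sum, Finset.sum_mul]
    apply Finset.sum_congr rfl
    intro i _
    rw [star_mul']
    have : star ((u i : ℝ) : ℂ) = ((u i : ℝ) : ℂ) := by
      simp [Complex.conj_ofReal]
    rw [this]; ring
  rw [Finset.sum_congr rfl (fun m _ => h1 m), Finset.sum_comm]
  apply Finset.sum_congr rfl
  intro i _
  rw [Finset.mul_sum]

lemma factB {M N : ℕ} (Φ : Matrix (Fin M) (Fin N) ℂ) (x : Fin N → ℂ) (v : Fin N → ℝ) :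
    (∑ m, star (Φ.mulVec x m) * Φ.mulVec (fun j => ((v j : ℝ):ℂ)) m)
      = Lmap (fun j => ∑ m, star (Φ.mulVec x m) * Φ m j) v := by
  rw [Lmap_apply]
  have h1 : ∀ m, star (Φ.mulVec x m) * Φ.mulVec (fun j => ((v j : ℝ):ℂ)) m
      = ∑ j, (v j : ℂ) * (star (Φ.mulVec x m) * Φ m j) := by
    intro m
    rw [mulVec_coe, Finset.mul_sum]
    apply Finset.sum_congr rfl
    intro j _
    ring
  rw [Finset.sum_congr rfl (fun m _ => h1 m), Finset.sum_comm]
  apply Finset.sum_congr rfl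
  intro j _
  rw [Finset.mul_sum]

/-- Flat restricted orthogonality implies restricted orthogonality:
if Φ has (K,θhat)-flat restricted orthogonality then θ_K ≤ 75·θhat·log K (K ≥ 2). -/
theorem stmt_6 (M N K : ℕ) (hK : 2 ≤ K) (Φ : Matrix (Fin M) (Fin N) ℂ)
    (θhat : ℝ) (hθhat : 0 ≤ θhat)
    (hFRO : ∀ I J : Finset (Fin N), Disjoint I J → I.card ≤ K → J.card ≤ K →
      ‖∑ m : Fin M, star (∑ i ∈ I, Φ m i) * (∑ j ∈ J, Φ m j)‖
        ≤ θhat * Real.sqrt ((I.card : ℝ) * (J.card : ℝ))) :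
    ∀ x y : Fin N → ℂ,
      (∃ S T : Finset (Fin N), Disjoint S T ∧ S.card ≤ K ∧ T.card ≤ K ∧
        (∀ n ∉ S, x n = 0) ∧ (∀ n ∉ T, y n = 0)) →
      ‖∑ m : Fin M, star (Φ.mulVec x m) * Φ.mulVec y m‖
        ≤ 75 * θhat * Real.log K *
          Real.sqrt (∑ n : Fin N, ‖x n‖ ^ 2) * Real.sqrt (∑ n : Fin N, ‖y n‖ ^ 2) := by
  rintro x y ⟨S, T, hST, hS, hT, hxS, hyT⟩
  set L := Real.log K with hLdef
  have h1K : 1 < K := lt_of_lt_of_le Nat.one_lt_two hK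
  have hL0 : 0 < L := Real.log_pos (by exact_mod_cast h1K)
  have hss : Real.sqrt L * Real.sqrt L = L := Real.mul_self_sqrt hL0.le
  -- step A
  have stepA : ∀ a : Fin N → ℝ, (∀ i, 0 ≤ a i) → (∀ i ∉ S, a i = 0) →
      ∀ J ⊆ T, ‖∑ m, star (Φ.mulVec (fun i => ((a i : ℝ):ℂ)) m)
          * Φ.mulVec (fun j => if j ∈ J then (1:ℂ) else 0) m‖
        ≤ ((7/4) * Real.sqrt L * θhat * Real.sqrt (∑ i, a i ^ 2)) * Real.sqrt (J.card) := by
    intro a ha0 haS J hJT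
    have hIbnd : ∀ I ⊆ S, ‖(Lmap (fun i => ∑ m, star (Φ m i)
          * Φ.mulVec (fun j => if j ∈ J then (1:ℂ) else 0) m)) (fun i => if i ∈ I then (1:ℝ) else 0)‖
        ≤ (θhat * Real.sqrt (J.card)) * Real.sqrt (I.card) := by
      intro I hIS
      rw [Lmap_ind]
      have hswap : ∑ i ∈ I, ∑ m, star (Φ m i) * Φ.mulVec (fun j => if j ∈ J then (1:ℂ) else 0) m
          = ∑ m, star (∑ i ∈ I, Φ m i) * (∑ j ∈ J, Φ m j) := by
        rw [Finset.sum_comm]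
        apply Finset.sum_congr rfl
        intro m _
        rw [star_sum, Finset.sum_mul]
        apply Finset.sum_congr rfl
        intro i _
        rw [mulVec_ind]
      rw [hswap]
      have hdisj : Disjoint I J := hST.mono hIS hJT
      have hb := hFRO I J hdisj (le_trans (Finset.card_le_card hIS) hS)
        (le_trans (Finset.card_le_card hJT) hT)
      calc ‖∑ m, star (∑ i ∈ I, Φ m i) * (∑ j ∈ J, Φ m j)‖
          ≤ θhat * Real.sqrt ((I.card : ℝ) * (J.card : ℝ)) := hb
        _ = (θhat * Real.sqrt (J.card)) * Real.sqrt (I.card) := by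
            rw [Real.sqrt_mul (Nat.cast_nonneg _)]; ring
    have hres := core hK (Lmap (fun i => ∑ m, star (Φ m i)
        * Φ.mulVec (fun j => if j ∈ J then (1:ℂ) else 0) m)) S hS
      (θhat * Real.sqrt (J.card)) (mul_nonneg hθhat (Real.sqrt_nonneg _)) hIbnd a ha0 haS
    rw [← factA] at hres
    calc _ ≤ (7/4) * Real.sqrt L * (θhat * Real.sqrt (J.card)) * Real.sqrt (∑ i, a i ^ 2) := hres
      _ = ((7/4) * Real.sqrt L * θhat * Real.sqrt (∑ i, a i ^ 2)) * Real.sqrt (J.card) := by ring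
  -- step B : key bilinear bound for nonnegative parts
  have key : ∀ a b : Fin N → ℝ, (∀ i, 0 ≤ a i) → (∀ i ∉ S, a i = 0) →
      (∀ j, 0 ≤ b j) → (∀ j ∉ T, b j = 0) →
      ‖∑ m, star (Φ.mulVec (fun i => ((a i : ℝ):ℂ)) m) * Φ.mulVec (fun j => ((b j : ℝ):ℂ)) m‖
        ≤ (49/16) * θhat * L * Real.sqrt (∑ i, a i ^ 2) * Real.sqrt (∑ j, b j ^ 2) := by
    intro a b ha0 haS hb0 hbT
    have hIbnd : ∀ J ⊆ T, ‖(Lmap (fun j => ∑ m,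
          star (Φ.mulVec (fun i => ((a i : ℝ):ℂ)) m) * Φ m j)) (fun j => if j ∈ J then (1:ℝ) else 0)‖
        ≤ ((7/4) * Real.sqrt L * θhat * Real.sqrt (∑ i, a i ^ 2)) * Real.sqrt (J.card) := by
      intro J hJT
      rw [Lmap_ind]
      have hswap : ∑ j ∈ J, ∑ m, star (Φ.mulVec (fun i => ((a i : ℝ):ℂ)) m) * Φ m j
          = ∑ m, star (Φ.mulVec (fun i => ((a i : ℝ):ℂ)) m)
              * Φ.mulVec (fun j => if j ∈ J then (1:ℂ) else 0) m := by
        rw [Finset.sum_comm]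
        apply Finset.sum_congr rfl
        intro m _
        rw [mulVec_ind, Finset.mul_sum]
      rw [hswap]
      exact stepA a ha0 haS J hJT
    have hres := core hK (Lmap (fun j => ∑ m,
        star (Φ.mulVec (fun i => ((a i : ℝ):ℂ)) m) * Φ m j)) T hT
      ((7/4) * Real.sqrt L * θhat * Real.sqrt (∑ i, a i ^ 2))
      (by positivity) hIbnd b hb0 hbT
    rw [← factB] at hres
    calc _ ≤ (7/4) * Real.sqrt L * ((7/4) * Real.sqrt L * θhat * Real.sqrt (∑ i, a i ^ 2))
          * Real.sqrt (∑ j, b j ^ 2) := hres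
      _ = (49/16) * θhat * L * Real.sqrt (∑ i, a i ^ 2) * Real.sqrt (∑ j, b j ^ 2) := by
          linear_combination (49/16) * θhat * Real.sqrt (∑ i, a i ^ 2) * Real.sqrt (∑ j, b j ^ 2) * hss
  -- decomposition of x and y into nonnegative parts
  set a1 : Fin N → ℝ := fun n => max (x n).re 0 with ha1
  set a2 : Fin N → ℝ := fun n => max (-(x n).re) 0 with ha2
  set a3 : Fin N → ℝ := fun n => max (x n).im 0 with ha3
  set a4 : Fin N → ℝ := fun n => max (-(x n).im) 0 with ha4
  set b1 : Fin N → ℝ := fun n => max (y n).re 0 with hb1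
  set b2 : Fin N → ℝ := fun n => max (-(y n).re) 0 with hb2
  set b3 : Fin N → ℝ := fun n => max (y n).im 0 with hb3
  set b4 : Fin N → ℝ := fun n => max (-(y n).im) 0 with hb4
  have hxdec : x = ((fun n => ((a1 n : ℝ):ℂ)) - (fun n => ((a2 n : ℝ):ℂ)))
      + Complex.I • ((fun n => ((a3 n : ℝ):ℂ)) - (fun n => ((a4 n : ℝ):ℂ))) := by
    funext n
    simp only [Pi.add_apply, Pi.sub_apply, Pi.smul_apply, smul_eq_mul, ha1, ha2, ha3, ha4]
    apply Complex.ext <;>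
      simp [max_zero_sub_max_neg_zero_eq_self]
  have hydec : y = ((fun n => ((b1 n : ℝ):ℂ)) - (fun n => ((b2 n : ℝ):ℂ)))
      + Complex.I • ((fun n => ((b3 n : ℝ):ℂ)) - (fun n => ((b4 n : ℝ):ℂ))) := by
    funext n
    simp only [Pi.add_apply, Pi.sub_apply, Pi.smul_apply, smul_eq_mul, hb1, hb2, hb3, hb4]
    apply Complex.ext <;>
      simp [max_zero_sub_max_neg_zero_eq_self]
  -- norm splitting lemmas
  have hsplitL : ∀ y' : Fin N → ℂ,
      ‖∑ m, star (Φ.mulVec x m) * Φ.mulVec y' m‖ ≤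
        ‖∑ m, star (Φ.mulVec (fun n => ((a1 n : ℝ):ℂ)) m) * Φ.mulVec y' m‖
      + ‖∑ m, star (Φ.mulVec (fun n => ((a2 n : ℝ):ℂ)) m) * Φ.mulVec y' m‖
      + ‖∑ m, star (Φ.mulVec (fun n => ((a3 n : ℝ):ℂ)) m) * Φ.mulVec y' m‖
      + ‖∑ m, star (Φ.mulVec (fun n => ((a4 n : ℝ):ℂ)) m) * Φ.mulVec y' m‖ := by
    intro y'
    have hterm : ∀ m, star (Φ.mulVec x m) * Φ.mulVec y' m
        = (star (Φ.mulVec (fun n => ((a1 n : ℝ):ℂ)) m) * Φ.mulVec y' m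
            - star (Φ.mulVec (fun n => ((a2 n : ℝ):ℂ)) m) * Φ.mulVec y' m)
          + (-Complex.I) * (star (Φ.mulVec (fun n => ((a3 n : ℝ):ℂ)) m) * Φ.mulVec y' m
            - star (Φ.mulVec (fun n => ((a4 n : ℝ):ℂ)) m) * Φ.mulVec y' m) := by
      intro m
      conv_lhs => rw [hxdec]
      simp only [Matrix.mulVec_add, Matrix.mulVec_sub, Matrix.mulVec_smul, Pi.add_apply,
        Pi.sub_apply, Pi.smul_apply, smul_eq_mul, star_add, star_sub, star_mul',
        Complex.star_def, Complex.conj_I, map_sub]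
      ring
    rw [Finset.sum_congr rfl (fun m _ => hterm m)]
    rw [Finset.sum_add_distrib, Finset.sum_sub_distrib, ← Finset.mul_sum, Finset.sum_sub_distrib]
    refine le_trans (norm_add_le _ _) ?_
    have h2 : ‖(-Complex.I) * ((∑ m, star (Φ.mulVec (fun n => ((a3 n : ℝ):ℂ)) m) * Φ.mulVec y' m)
        - ∑ m, star (Φ.mulVec (fun n => ((a4 n : ℝ):ℂ)) m) * Φ.mulVec y' m)‖
        = ‖(∑ m, star (Φ.mulVec (fun n => ((a3 n : ℝ):ℂ)) m) * Φ.mulVec y' m)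
        - ∑ m, star (Φ.mulVec (fun n => ((a4 n : ℝ):ℂ)) m) * Φ.mulVec y' m‖ := by
      rw [norm_mul]; simp
    rw [h2]
    have := norm_sub_le (∑ m, star (Φ.mulVec (fun n => ((a1 n : ℝ):ℂ)) m) * Φ.mulVec y' m)
      (∑ m, star (Φ.mulVec (fun n => ((a2 n : ℝ):ℂ)) m) * Φ.mulVec y' m)
    have h4 := norm_sub_le (∑ m, star (Φ.mulVec (fun n => ((a3 n : ℝ):ℂ)) m) * Φ.mulVec y' m)
      (∑ m, star (Φ.mulVec (fun n => ((a4 n : ℝ):ℂ)) m) * Φ.mulVec y' m)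
    linarith
  have hsplitR : ∀ x' : Fin N → ℂ,
      ‖∑ m, star (Φ.mulVec x' m) * Φ.mulVec y m‖ ≤
        ‖∑ m, star (Φ.mulVec x' m) * Φ.mulVec (fun n => ((b1 n : ℝ):ℂ)) m‖
      + ‖∑ m, star (Φ.mulVec x' m) * Φ.mulVec (fun n => ((b2 n : ℝ):ℂ)) m‖
      + ‖∑ m, star (Φ.mulVec x' m) * Φ.mulVec (fun n => ((b3 n : ℝ):ℂ)) m‖
      + ‖∑ m, star (Φ.mulVec x' m) * Φ.mulVec (fun n => ((b4 n : ℝ):ℂ)) m‖ := by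
    intro x'
    have hterm : ∀ m, star (Φ.mulVec x' m) * Φ.mulVec y m
        = (star (Φ.mulVec x' m) * Φ.mulVec (fun n => ((b1 n : ℝ):ℂ)) m
            - star (Φ.mulVec x' m) * Φ.mulVec (fun n => ((b2 n : ℝ):ℂ)) m)
          + Complex.I * (star (Φ.mulVec x' m) * Φ.mulVec (fun n => ((b3 n : ℝ):ℂ)) m
            - star (Φ.mulVec x' m) * Φ.mulVec (fun n => ((b4 n : ℝ):ℂ)) m) := by
      intro m
      conv_lhs => rw [hydec]
      simp only [Matrix.mulVec_add, Matrix.mulVec_sub, Matrix.mulVec_smul, Pi.add_apply,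
        Pi.sub_apply, Pi.smul_apply, smul_eq_mul]
      ring
    rw [Finset.sum_congr rfl (fun m _ => hterm m)]
    rw [Finset.sum_add_distrib, Finset.sum_sub_distrib, ← Finset.mul_sum, Finset.sum_sub_distrib]
    refine le_trans (norm_add_le _ _) ?_
    have h2 : ‖Complex.I * ((∑ m, star (Φ.mulVec x' m) * Φ.mulVec (fun n => ((b3 n : ℝ):ℂ)) m)
        - ∑ m, star (Φ.mulVec x' m) * Φ.mulVec (fun n => ((b4 n : ℝ):ℂ)) m)‖
        = ‖(∑ m, star (Φ.mulVec x' m) * Φ.mulVec (fun n => ((b3 n : ℝ):ℂ)) m)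
        - ∑ m, star (Φ.mulVec x' m) * Φ.mulVec (fun n => ((b4 n : ℝ):ℂ)) m‖ := by
      rw [norm_mul]; simp
    rw [h2]
    have := norm_sub_le (∑ m, star (Φ.mulVec x' m) * Φ.mulVec (fun n => ((b1 n : ℝ):ℂ)) m)
      (∑ m, star (Φ.mulVec x' m) * Φ.mulVec (fun n => ((b2 n : ℝ):ℂ)) m)
    have h4 := norm_sub_le (∑ m, star (Φ.mulVec x' m) * Φ.mulVec (fun n => ((b3 n : ℝ):ℂ)) m)
      (∑ m, star (Φ.mulVec x' m) * Φ.mulVec (fun n => ((b4 n : ℝ):ℂ)) m)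
    linarith
  -- size facts
  set X := Real.sqrt (∑ n, ‖x n‖ ^ 2) with hXdef
  set Y := Real.sqrt (∑ n, ‖y n‖ ^ 2) with hYdef
  have hX0g : 0 ≤ X := by rw [hXdef]; exact Real.sqrt_nonneg _
  have hY0g : 0 ≤ Y := by rw [hYdef]; exact Real.sqrt_nonneg _
  have hsqle : ∀ (r : Fin N → ℝ) (z : Fin N → ℂ), (∀ n, |r n| ≤ ‖z n‖) →
      Real.sqrt (∑ i, r i ^ 2) ≤ Real.sqrt (∑ n, ‖z n‖ ^ 2) := by
    intro r z h
    apply Real.sqrt_le_sqrt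
    apply Finset.sum_le_sum
    intro i _
    nlinarith [h i, sq_abs (r i), abs_nonneg (r i), norm_nonneg (z i)]
  have habs_max : ∀ c : ℝ, |max c 0| ≤ |c| := by
    intro c
    rw [abs_of_nonneg (le_max_right _ _)]
    exact max_le (le_abs_self _) (abs_nonneg _)
  have habs_max' : ∀ c : ℝ, |max (-c) 0| ≤ |c| := by
    intro c
    rw [abs_of_nonneg (le_max_right _ _)]
    exact max_le (neg_le_abs _) (abs_nonneg _)
  have hrele : ∀ z : ℂ, |z.re| ≤ ‖z‖ := fun z => by
    exact Complex.abs_re_le_norm z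
  have himle : ∀ z : ℂ, |z.im| ≤ ‖z‖ := fun z => by
    exact Complex.abs_im_le_norm z
  -- the sixteen-term bound
  have bnd : ∀ p q : Fin N → ℝ, (∀ i, 0 ≤ p i) → (∀ i ∉ S, p i = 0) → (∀ n, |p n| ≤ ‖x n‖) →
      (∀ j, 0 ≤ q j) → (∀ j ∉ T, q j = 0) → (∀ n, |q n| ≤ ‖y n‖) →
      ‖∑ m, star (Φ.mulVec (fun n => ((p n : ℝ):ℂ)) m) * Φ.mulVec (fun n => ((q n : ℝ):ℂ)) m‖
        ≤ (49/16) * θhat * L * X * Y := by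
    intro p q hp0 hpS hpx hq0 hqT hqy
    refine le_trans (key p q hp0 hpS hq0 hqT) ?_
    have h1 := hsqle p x hpx
    have h2 := hsqle q y hqy
    rw [← hXdef] at h1
    rw [← hYdef] at h2
    have hX0 : 0 ≤ X := le_trans (Real.sqrt_nonneg _) h1
    have h3 : 0 ≤ (49:ℝ)/16 * θhat * L := by positivity
    calc (49/16) * θhat * L * Real.sqrt (∑ i, p i ^ 2) * Real.sqrt (∑ j, q j ^ 2)
        ≤ (49/16) * θhat * L * X * Real.sqrt (∑ j, q j ^ 2) :=
          mul_le_mul_of_nonneg_right (mul_le_mul_of_nonneg_left h1 h3) (Real.sqrt_nonneg _)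
      _ ≤ (49/16) * θhat * L * X * Y :=
          mul_le_mul_of_nonneg_left h2 (mul_nonneg h3 hX0)
  -- part properties
  have pa1 : (∀ i, 0 ≤ a1 i) ∧ (∀ i ∉ S, a1 i = 0) ∧ (∀ n, |a1 n| ≤ ‖x n‖) :=
    ⟨fun i => le_max_right _ _, fun i hi => by simp [ha1, hxS i hi],
     fun n => le_trans (habs_max _) (hrele _)⟩
  have pa2 : (∀ i, 0 ≤ a2 i) ∧ (∀ i ∉ S, a2 i = 0) ∧ (∀ n, |a2 n| ≤ ‖x n‖) :=
    ⟨fun i => le_max_right _ _, fun i hi => by simp [ha2, hxS i hi],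
     fun n => le_trans (habs_max' _) (hrele _)⟩
  have pa3 : (∀ i, 0 ≤ a3 i) ∧ (∀ i ∉ S, a3 i = 0) ∧ (∀ n, |a3 n| ≤ ‖x n‖) :=
    ⟨fun i => le_max_right _ _, fun i hi => by simp [ha3, hxS i hi],
     fun n => le_trans (habs_max _) (himle _)⟩
  have pa4 : (∀ i, 0 ≤ a4 i) ∧ (∀ i ∉ S, a4 i = 0) ∧ (∀ n, |a4 n| ≤ ‖x n‖) :=
    ⟨fun i => le_max_right _ _, fun i hi => by simp [ha4, hxS i hi],
     fun n => le_trans (habs_max' _) (himle _)⟩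
  have pb1 : (∀ j, 0 ≤ b1 j) ∧ (∀ j ∉ T, b1 j = 0) ∧ (∀ n, |b1 n| ≤ ‖y n‖) :=
    ⟨fun i => le_max_right _ _, fun i hi => by simp [hb1, hyT i hi],
     fun n => le_trans (habs_max _) (hrele _)⟩
  have pb2 : (∀ j, 0 ≤ b2 j) ∧ (∀ j ∉ T, b2 j = 0) ∧ (∀ n, |b2 n| ≤ ‖y n‖) :=
    ⟨fun i => le_max_right _ _, fun i hi => by simp [hb2, hyT i hi],
     fun n => le_trans (habs_max' _) (hrele _)⟩
  have pb3 : (∀ j, 0 ≤ b3 j) ∧ (∀ j ∉ T, b3 j = 0) ∧ (∀ n, |b3 n| ≤ ‖y n‖) :=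
    ⟨fun i => le_max_right _ _, fun i hi => by simp [hb3, hyT i hi],
     fun n => le_trans (habs_max _) (himle _)⟩
  have pb4 : (∀ j, 0 ≤ b4 j) ∧ (∀ j ∉ T, b4 j = 0) ∧ (∀ n, |b4 n| ≤ ‖y n‖) :=
    ⟨fun i => le_max_right _ _, fun i hi => by simp [hb4, hyT i hi],
     fun n => le_trans (habs_max' _) (himle _)⟩
  -- row bound: for each real part p of x, sum over the four parts of y
  have row : ∀ p : Fin N → ℝ, (∀ i, 0 ≤ p i) → (∀ i ∉ S, p i = 0) → (∀ n, |p n| ≤ ‖x n‖) →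
      ‖∑ m, star (Φ.mulVec (fun n => ((p n : ℝ):ℂ)) m) * Φ.mulVec y m‖
        ≤ 4 * ((49/16) * θhat * L * X * Y) := by
    intro p hp0 hpS hpx
    refine le_trans (hsplitR (fun n => ((p n : ℝ):ℂ))) ?_
    have t1 := bnd p b1 hp0 hpS hpx pb1.1 pb1.2.1 pb1.2.2
    have t2 := bnd p b2 hp0 hpS hpx pb2.1 pb2.2.1 pb2.2.2
    have t3 := bnd p b3 hp0 hpS hpx pb3.1 pb3.2.1 pb3.2.2
    have t4 := bnd p b4 hp0 hpS hpx pb4.1 pb4.2.1 pb4.2.2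
    linarith
  have r1 := row a1 pa1.1 pa1.2.1 pa1.2.2
  have r2 := row a2 pa2.1 pa2.2.1 pa2.2.2
  have r3 := row a3 pa3.1 pa3.2.1 pa3.2.2
  have r4 := row a4 pa4.1 pa4.2.1 pa4.2.2
  have htot := le_trans (hsplitL y) (by linarith :
    ‖∑ m, star (Φ.mulVec (fun n => ((a1 n : ℝ):ℂ)) m) * Φ.mulVec y m‖
      + ‖∑ m, star (Φ.mulVec (fun n => ((a2 n : ℝ):ℂ)) m) * Φ.mulVec y m‖
      + ‖∑ m, star (Φ.mulVec (fun n => ((a3 n : ℝ):ℂ)) m) * Φ.mulVec y m‖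
      + ‖∑ m, star (Φ.mulVec (fun n => ((a4 n : ℝ):ℂ)) m) * Φ.mulVec y m‖
      ≤ 49 * θhat * L * X * Y)
  have hpos : 0 ≤ θhat * L * X * Y :=
    mul_nonneg (mul_nonneg (mul_nonneg hθhat hL0.le) hX0g) hY0g
  calc ‖∑ m, star (Φ.mulVec x m) * Φ.mulVec y m‖ ≤ 49 * θhat * L * X * Y := htot
    _ ≤ 75 * θhat * L * X * Y := by nlinarith [hpos]
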